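/- Let L ≥ 1, N a positive even integer, Δx = L/N, let g : 𝒳 → ℂ be a lattice function with discrete Fourier transform ĝ, and let m be a positive integer. Then ‖ d(·,0)^m g ‖_{L²(𝒳)} ≤ (π/2)^m (1/√(2π)) ‖ 𝒟^{(m)} ĝ ‖_{L²(𝒦)}, where 𝒟^{(m)} denotes the m-fold application of the periodic difference operator 𝒟 on the Fourier grid, and d(x,0) = x for x ∈ [0, L/2), d(x,0) = L − x for x ∈ [L/2, L). -/

import Mathlib

open scoped BigOperators Real
open MeasureTheory

noncomputable section

/-- The periodic distance `min_{k ∈ ℤ} |x - L k|`. -/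
def dtilde (L x : ℝ) : ℝ := sInf {r : ℝ | ∃ k : ℤ, r = |x - L * k|}

/-- The mollified periodic distance `d_L(x, 0)`. -/
def dmol (L x : ℝ) : ℝ :=
  Real.sqrt (L ^ 2 / 4 + 1) -
    Real.sqrt ((Real.sqrt (L ^ 2 / 4 + 1) - Real.sqrt (dtilde L x ^ 2 + 1)) ^ 2 + 1)

/-- The mollified periodic distance `d_L(x, y)`. -/
def dL (L x y : ℝ) : ℝ := dmol L (x - y)

/-- The grid point `x_i = i Δx`, with `Δx = L / N`. -/
def gridX (L : ℝ) (N : ℕ) (i : ZMod N) : ℝ := (ZMod.val i : ℝ) * (L / N)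

/-- Forward difference operator on periodic lattice functions. -/
def Dplus {N : ℕ} (dx : ℝ) (f : ZMod N → ℂ) : ZMod N → ℂ :=
  fun i => (f (i + 1) - f i) / (dx : ℂ)

/-- Backward difference operator on periodic lattice functions. -/
def Dminus {N : ℕ} (dx : ℝ) (f : ZMod N → ℂ) : ZMod N → ℂ :=
  fun i => (f i - f (i - 1)) / (dx : ℂ)

/-- Second order finite difference Laplacian `Δ = 𝒟⁺𝒟⁻`. -/
def discLap {N : ℕ} (dx : ℝ) (f : ZMod N → ℂ) : ZMod N → ℂ :=
  Dplus dx (Dminus dx f)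

/-- Weighted `ℓ²` norm `(w Σ |f i|²)^{1/2}`; with `w = Δx` this is `‖·‖_{L²(𝒳)}`,
with `w = Δk` this is `‖·‖_{L²(𝒦)}`. -/
def wnorm {N : ℕ} [NeZero N] (w : ℝ) (f : ZMod N → ℂ) : ℝ :=
  Real.sqrt (w * ∑ i : ZMod N, ‖f i‖ ^ 2)

/-- The Fourier grid point `k = n Δk` with `n ∈ (-N/2, N/2]` corresponding to `j ∈ ZMod N`. -/
def kval (L : ℝ) (N : ℕ) (j : ZMod N) : ℝ :=
  ((if (ZMod.val j : ℤ) ≤ (N : ℤ) / 2 then (ZMod.val j : ℤ) else (ZMod.val j : ℤ) - (N : ℤ)) : ℝ) *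
    (2 * Real.pi / L)

/-- Discrete Fourier transform `f̂_k = Δx Σ_x e^{-i k x} f(x)`. -/
def dft (L : ℝ) {N : ℕ} [NeZero N] (f : ZMod N → ℂ) (j : ZMod N) : ℂ :=
  ((L / N : ℝ) : ℂ) *
    ∑ i : ZMod N, Complex.exp (-Complex.I * (kval L N j : ℂ) * ((gridX L N i : ℝ) : ℂ)) * f i

/-- Inverse discrete Fourier transform `f(x) = (1/L) Σ_k e^{i k x} f̂_k`. -/
def idft (L : ℝ) {N : ℕ} [NeZero N] (fh : ZMod N → ℂ) (i : ZMod N) : ℂ :=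
  ((1 / L : ℝ) : ℂ) *
    ∑ j : ZMod N, Complex.exp (Complex.I * (kval L N j : ℂ) * ((gridX L N i : ℝ) : ℂ)) * fh j

/-- Periodic difference operator on the Fourier grid, `(𝒟 f̂)_k = (f̂_k - f̂_{k-Δk})/Δk`. -/
def Dk {N : ℕ} (dk : ℝ) (fh : ZMod N → ℂ) : ZMod N → ℂ :=
  fun j => (fh j - fh (j - 1)) / (dk : ℂ)

/-- Real-valued version of the periodic difference operator on the Fourier grid. -/
def DkR {N : ℕ} (dk : ℝ) (fh : ZMod N → ℝ) : ZMod N → ℝ :=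
  fun j => (fh j - fh (j - 1)) / dk

/-- The distance `d(x,0)`: equal to `x` on `[0, L/2)` and `L - x` on `[L/2, L)`. -/
def dfun (L x : ℝ) : ℝ := if x < L / 2 then x else L - x

/-- The mollified symbol `ĥ_k = θ̂(k)(k² - k_c²) + k_c²` on the Fourier grid, `k_c = π N / L`. -/
def hsym (L : ℝ) (N : ℕ) (θ : ℝ → ℝ) (j : ZMod N) : ℝ :=
  θ (kval L N j) * ((kval L N j) ^ 2 - (Real.pi * N / L) ^ 2) + (Real.pi * N / L) ^ 2

/-- The Fourier space Hamiltonian matrix `Ĥ_{kl} = ĥ_k δ_{kl} + (1/L) V̂_{k-l}`. -/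
def Hmat (L : ℝ) {N : ℕ} [NeZero N] (hh : ZMod N → ℝ) (V : ZMod N → ℝ) :
    Matrix (ZMod N) (ZMod N) ℂ :=
  Matrix.of fun k l =>
    (if k = l then (hh k : ℂ) else 0) + ((1 / L : ℝ) : ℂ) * dft L (fun i => (V i : ℂ)) (k - l)

end


section Aux

open Complex

variable {N : ℕ} [NeZero N]

private lemma psi_mul (a b : ZMod N) :
    ZMod.stdAddChar (a + b) = ZMod.stdAddChar a * ZMod.stdAddChar b :=
  AddChar.map_add_eq_mul _ a b

private lemma psi_neg (a : ZMod N) :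
    ZMod.stdAddChar (-a) = (ZMod.stdAddChar a : ℂ)⁻¹ := by
  refine eq_inv_of_mul_eq_one_left ?_
  rw [← psi_mul, neg_add_cancel, AddChar.map_zero_eq_one]

private lemma psi_norm (a : ZMod N) : ‖(ZMod.stdAddChar a : ℂ)‖ = 1 := by
  rw [ZMod.stdAddChar_apply]; exact Circle.norm_coe _

private lemma psi_conj (a : ZMod N) :
    (starRingEnd ℂ) (ZMod.stdAddChar a) = ZMod.stdAddChar (-a) := by
  rw [psi_neg, Complex.inv_eq_conj (psi_norm a)]

private lemma expk (L : ℝ) (hL : L ≠ 0) (j i : ZMod N) :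
    Complex.exp (Complex.I * (kval L N j : ℂ) * ((gridX L N i : ℝ) : ℂ)) =
      ZMod.stdAddChar (j * i) := by
  have hN : (N : ℝ) ≠ 0 := Nat.cast_ne_zero.mpr (NeZero.ne N)
  set n : ℤ := if (ZMod.val j : ℤ) ≤ (N : ℤ) / 2 then (ZMod.val j : ℤ)
    else (ZMod.val j : ℤ) - (N : ℤ) with hn
  have hk : kval L N j = (n : ℝ) * (2 * Real.pi / L) := by
    rw [hn]; simp only [kval, apply_ite (fun z : ℤ => (z : ℝ))]; push_cast; ring_nf
  have h1 : Complex.I * (kval L N j : ℂ) * ((gridX L N i : ℝ) : ℂ)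
      = 2 * Real.pi * Complex.I * ((n * (ZMod.val i : ℤ) : ℤ) : ℂ) / (N : ℂ) := by
    have hNC : (N : ℂ) ≠ 0 := by exact_mod_cast hN
    have hLC : (L : ℂ) ≠ 0 := by exact_mod_cast hL
    rw [hk]; simp only [gridX]; push_cast; field_simp
  have h2 : ((n * (ZMod.val i : ℤ) : ℤ) : ZMod N) = j * i := by
    push_cast
    have hj : ((n : ℤ) : ZMod N) = j := by
      rw [hn]; split <;> push_cast <;> simp [ZMod.natCast_zmod_val]
    rw [hj, ZMod.natCast_zmod_val]
  rw [h1, ← h2, ZMod.stdAddChar_coe]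

private lemma expk_neg (L : ℝ) (hL : L ≠ 0) (j i : ZMod N) :
    Complex.exp (-Complex.I * (kval L N j : ℂ) * ((gridX L N i : ℝ) : ℂ)) =
      ZMod.stdAddChar (-(j * i)) := by
  have : -Complex.I * (kval L N j : ℂ) * ((gridX L N i : ℝ) : ℂ)
      = -(Complex.I * (kval L N j : ℂ) * ((gridX L N i : ℝ) : ℂ)) := by ring
  rw [this, Complex.exp_neg, expk L hL, psi_neg]

private lemma dft_eq (L : ℝ) (hL : L ≠ 0) (f : ZMod N → ℂ) (j : ZMod N) :
    dft L f j = ((L / N : ℝ) : ℂ) * ∑ i : ZMod N, ZMod.stdAddChar (-(j * i)) * f i := by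
  unfold dft
  congr 1
  refine Finset.sum_congr rfl fun i _ => ?_
  rw [expk_neg L hL]

private lemma parseval_key (L : ℝ) (hL : L ≠ 0) (f : ZMod N → ℂ) :
    ∑ j : ZMod N, dft L f j * (starRingEnd ℂ) (dft L f j)
      = (N : ℂ) * ((L / N : ℝ) : ℂ) ^ 2 * ∑ i : ZMod N, f i * (starRingEnd ℂ) (f i) := by
  have hconj : ∀ j, (starRingEnd ℂ) (dft L f j)
      = ((L / N : ℝ) : ℂ) * ∑ i : ZMod N, ZMod.stdAddChar (j * i) * (starRingEnd ℂ) (f i) := by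
    intro j
    rw [dft_eq L hL, map_mul, map_sum]
    simp only [Complex.conj_ofReal, map_mul, psi_conj, neg_neg]
  have hS : ∀ b : ZMod N, ∑ j : ZMod N, ZMod.stdAddChar (j * b)
      = if b = 0 then ((N : ℕ) : ℂ) else 0 := by
    intro b
    rw [AddChar.sum_mulShift b (ZMod.isPrimitive_stdAddChar N)]
    split <;> simp [ZMod.card]
  calc ∑ j : ZMod N, dft L f j * (starRingEnd ℂ) (dft L f j)
      = ∑ j : ZMod N, ∑ i : ZMod N, ∑ i' : ZMod N,
          ((L / N : ℝ) : ℂ) ^ 2 * ((f i * (starRingEnd ℂ) (f i'))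
            * (ZMod.stdAddChar (-(j * i)) * ZMod.stdAddChar (j * i'))) := by
        refine Finset.sum_congr rfl fun j _ => ?_
        rw [hconj j, dft_eq L hL, mul_mul_mul_comm, Finset.sum_mul_sum]
        rw [← sq, Finset.mul_sum]
        refine Finset.sum_congr rfl fun i _ => ?_
        rw [Finset.mul_sum]
        refine Finset.sum_congr rfl fun i' _ => ?_
        ring
    _ = ∑ i : ZMod N, ∑ i' : ZMod N, ((L / N : ℝ) : ℂ) ^ 2 * ((f i * (starRingEnd ℂ) (f i'))
          * ∑ j : ZMod N, ZMod.stdAddChar (j * (i' - i))) := by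
        rw [Finset.sum_comm]
        refine Finset.sum_congr rfl fun i _ => ?_
        rw [Finset.sum_comm]
        refine Finset.sum_congr rfl fun i' _ => ?_
        rw [Finset.mul_sum, Finset.mul_sum]
        refine Finset.sum_congr rfl fun j _ => ?_
        have hchar : ZMod.stdAddChar (-(j * i)) * ZMod.stdAddChar (j * i')
            = ZMod.stdAddChar (j * (i' - i)) := by
          rw [← psi_mul]; congr 1; ring
        rw [hchar]
    _ = (N : ℂ) * ((L / N : ℝ) : ℂ) ^ 2 * ∑ i : ZMod N, f i * (starRingEnd ℂ) (f i) := by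
        rw [Finset.mul_sum]
        refine Finset.sum_congr rfl fun i _ => ?_
        rw [Finset.sum_eq_single_of_mem i (Finset.mem_univ i)]
        · rw [hS, if_pos (sub_self i)]
          push_cast
          ring
        · intro i' _ hne
          rw [hS, if_neg (sub_ne_zero.mpr hne), mul_zero, mul_zero]

private lemma parseval_real (L : ℝ) (hL : 0 < L) (f : ZMod N → ℂ) :
    (2 * Real.pi / L) * ∑ j : ZMod N, ‖dft L f j‖ ^ 2
      = 2 * Real.pi * ((L / N) * ∑ i : ZMod N, ‖f i‖ ^ 2) := by
  have hN : (0 : ℝ) < (N : ℝ) := by exact_mod_cast Nat.pos_of_ne_zero (NeZero.ne N)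
  have key := parseval_key L hL.ne' f
  have hre : ∀ (h : ZMod N → ℂ), (∑ j : ZMod N, h j * (starRingEnd ℂ) (h j)).re
      = ∑ j : ZMod N, ‖h j‖ ^ 2 := by
    intro h
    rw [Complex.re_sum]
    refine Finset.sum_congr rfl fun j _ => ?_
    rw [Complex.mul_conj, Complex.ofReal_re, Complex.normSq_eq_norm_sq]
  have h1 : (∑ j : ZMod N, dft L f j * (starRingEnd ℂ) (dft L f j)).re
      = (N : ℝ) * (L / N) ^ 2 * ∑ i : ZMod N, ‖f i‖ ^ 2 := by
    rw [key]
    have : ((N : ℂ) * ((L / N : ℝ) : ℂ) ^ 2 : ℂ) = (((N : ℝ) * (L / N) ^ 2 : ℝ) : ℂ) := by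
      push_cast; ring
    rw [this, Complex.re_ofReal_mul, hre]
  rw [hre] at h1
  rw [h1]
  set S := ∑ i : ZMod N, ‖f i‖ ^ 2
  field_simp

private lemma parseval_wnorm (L : ℝ) (hL : 0 < L) (f : ZMod N → ℂ) :
    wnorm (2 * Real.pi / L) (dft L f) = Real.sqrt (2 * Real.pi) * wnorm (L / N) f := by
  unfold wnorm
  rw [parseval_real L hL f, Real.sqrt_mul (by positivity)]

/-- The symbol `φ(x) = (1 - e^{iΔk x})/Δk` as a function of the lattice index. -/
private noncomputable def phiC (L : ℝ) (N : ℕ) [NeZero N] (i : ZMod N) : ℂ :=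
  ((1 : ℂ) - ZMod.stdAddChar i) * ((L / (2 * Real.pi) : ℝ) : ℂ)

private lemma dk_shift (L : ℝ) (hL : 0 < L) (f : ZMod N → ℂ) :
    Dk (2 * Real.pi / L) (dft L f) = dft L (fun i => phiC L N i * f i) := by
  have hpi := Real.pi_pos
  have hd : ((2 * Real.pi / L : ℝ) : ℂ) ≠ 0 := by
    simp only [ne_eq, Complex.ofReal_eq_zero]
    positivity
  funext j
  show (dft L f j - dft L f (j - 1)) / ((2 * Real.pi / L : ℝ) : ℂ) = _
  rw [div_eq_iff hd, dft_eq L hL.ne' f, dft_eq L hL.ne' f,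
    dft_eq L hL.ne' (fun i => phiC L N i * f i), ← mul_sub, ← Finset.sum_sub_distrib,
    mul_assoc, Finset.sum_mul]
  congr 1
  refine Finset.sum_congr rfl fun i _ => ?_
  symm
  have hchar : ZMod.stdAddChar (-((j - 1) * i))
      = ZMod.stdAddChar (-(j * i)) * ZMod.stdAddChar i := by
    rw [← psi_mul]; congr 1; ring
  rw [hchar]
  have hinv : ((L / (2 * Real.pi) : ℝ) : ℂ) * ((2 * Real.pi / L : ℝ) : ℂ) = 1 := by
    have hr : (L / (2 * Real.pi)) * (2 * Real.pi / L) = 1 := by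
      field_simp
    rw [← Complex.ofReal_mul, hr, Complex.ofReal_one]
  unfold phiC
  calc ZMod.stdAddChar (-(j * i)) * ((1 - ZMod.stdAddChar i) * ((L / (2 * Real.pi) : ℝ) : ℂ) * f i)
        * ((2 * Real.pi / L : ℝ) : ℂ)
      = ZMod.stdAddChar (-(j * i)) * (1 - ZMod.stdAddChar i) * f i
          * (((L / (2 * Real.pi) : ℝ) : ℂ) * ((2 * Real.pi / L : ℝ) : ℂ)) := by ring
    _ = ZMod.stdAddChar (-(j * i)) * f i - ZMod.stdAddChar (-(j * i)) * ZMod.stdAddChar i * f i := by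
        rw [hinv, mul_one]; ring

private lemma dk_iterate (L : ℝ) (hL : 0 < L) (g : ZMod N → ℂ) (m : ℕ) :
    (Dk (2 * Real.pi / L))^[m] (dft L g) = dft L (fun i => phiC L N i ^ m * g i) := by
  induction m with
  | zero => simp
  | succ m ih =>
      rw [Function.iterate_succ_apply', ih, dk_shift L hL]
      have : (fun i => phiC L N i * (phiC L N i ^ m * g i))
          = fun i => phiC L N i ^ (m + 1) * g i := by
        funext i
        rw [pow_succ]
        ring
      rw [this]

private lemma norm_one_sub_exp (θ : ℝ) :
    ‖(1 : ℂ) - Complex.exp (θ * Complex.I)‖ = 2 * |Real.sin (θ / 2)| := by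
  rw [Complex.exp_mul_I]
  have h1 : ((1 : ℂ) - (Complex.cos θ + Complex.sin θ * Complex.I)) =
      Complex.mk (1 - Real.cos θ) (-Real.sin θ) := by
    apply Complex.ext <;>
      simp [Complex.cos_ofReal_re, Complex.sin_ofReal_re, Complex.cos_ofReal_im,
        Complex.sin_ofReal_im]
  rw [h1]
  rw [Complex.norm_def, Complex.normSq_mk]
  have h2 : (1 - Real.cos θ) * (1 - Real.cos θ) + -Real.sin θ * -Real.sin θ
      = (2 * |Real.sin (θ / 2)|) ^ 2 := by
    have hs := Real.sin_sq_eq_half_sub (θ / 2)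
    have ht : 2 * (θ / 2) = θ := by ring
    rw [ht] at hs
    have hsc := Real.sin_sq_add_cos_sq θ
    nlinarith [_root_.sq_abs (Real.sin (θ / 2))]
  rw [h2, Real.sqrt_sq (by positivity)]

private lemma norm_phiC (L : ℝ) (hL : 0 < L) (i : ZMod N) :
    ‖phiC L N i‖ = (L / Real.pi) * Real.sin (Real.pi * (ZMod.val i) / N) := by
  have hpi := Real.pi_pos
  have hN : (0 : ℝ) < (N : ℝ) := by exact_mod_cast Nat.pos_of_ne_zero (NeZero.ne N)
  have hv : (ZMod.val i : ℝ) < (N : ℝ) := by exact_mod_cast ZMod.val_lt i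
  have hv0 : (0 : ℝ) ≤ (ZMod.val i : ℝ) := Nat.cast_nonneg _
  unfold phiC
  rw [norm_mul, Complex.norm_real, Real.norm_eq_abs, abs_of_pos (by positivity)]
  have hψ : (ZMod.stdAddChar i : ℂ) = Complex.exp ((2 * Real.pi * (ZMod.val i) / N : ℝ) * Complex.I) := by
    rw [ZMod.stdAddChar_apply, ZMod.toCircle_apply]
    congr 1
    push_cast
    ring
  rw [hψ, norm_one_sub_exp]
  have hhalf : (2 * Real.pi * (ZMod.val i) / N) / 2 = Real.pi * (ZMod.val i) / N := by ring
  rw [hhalf]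
  have hsin : |Real.sin (Real.pi * (ZMod.val i) / N)| = Real.sin (Real.pi * (ZMod.val i) / N) := by
    apply _root_.abs_of_nonneg
    apply Real.sin_nonneg_of_nonneg_of_le_pi
    · positivity
    · rw [div_le_iff₀ hN]
      calc Real.pi * (ZMod.val i) ≤ Real.pi * N := by
            apply mul_le_mul_of_nonneg_left hv.le hpi.le
        _ = Real.pi * N := rfl
  rw [hsin]
  field_simp

private lemma dfun_le (L : ℝ) (hL : 0 < L) (i : ZMod N) :
    dfun L (gridX L N i) ≤ (L / 2) * Real.sin (Real.pi * (ZMod.val i) / N) := by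
  have hpi := Real.pi_pos
  have hN : (0 : ℝ) < (N : ℝ) := by exact_mod_cast Nat.pos_of_ne_zero (NeZero.ne N)
  set x : ℝ := gridX L N i with hx
  have hx0 : 0 ≤ x := by
    rw [hx]; unfold gridX; positivity
  have hxL : x < L := by
    rw [hx]; unfold gridX
    have hv : (ZMod.val i : ℝ) < (N : ℝ) := by exact_mod_cast ZMod.val_lt i
    calc (ZMod.val i : ℝ) * (L / N) < (N : ℝ) * (L / N) := by
          apply mul_lt_mul_of_pos_right hv (by positivity)
      _ = L := by field_simp
  have ht : Real.pi * (ZMod.val i) / N = Real.pi * x / L := by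
    rw [hx]; unfold gridX; field_simp
  rw [ht]
  unfold dfun
  split_ifs with h
  · -- x < L / 2, dfun = x
    have h1 : Real.pi * x / L ≤ Real.pi / 2 := by
      rw [div_le_div_iff₀ hL (by norm_num : (0:ℝ) < 2)]
      calc Real.pi * x * 2 ≤ Real.pi * L := by nlinarith
        _ = Real.pi * L := rfl
    have h2 := Real.mul_le_sin (x := Real.pi * x / L) (by positivity) h1
    have h3 : 2 / Real.pi * (Real.pi * x / L) = 2 * x / L := by field_simp
    rw [h3] at h2
    have h5 : 2 * x ≤ Real.sin (Real.pi * x / L) * L := (div_le_iff₀ hL).mp h2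
    nlinarith
  · -- x ≥ L / 2, dfun = L - x
    push_neg at h
    have hy0 : 0 ≤ L - x := by linarith
    have h1 : Real.pi * (L - x) / L ≤ Real.pi / 2 := by
      rw [div_le_div_iff₀ hL (by norm_num : (0:ℝ) < 2)]
      nlinarith
    have h2 := Real.mul_le_sin (x := Real.pi * (L - x) / L) (by positivity) h1
    have h3 : 2 / Real.pi * (Real.pi * (L - x) / L) = 2 * (L - x) / L := by field_simp
    rw [h3] at h2
    have h4 : Real.sin (Real.pi * (L - x) / L) = Real.sin (Real.pi * x / L) := by
      have : Real.pi * (L - x) / L = Real.pi - Real.pi * x / L := by field_simp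
      rw [this, Real.sin_pi_sub]
    rw [h4] at h2
    have h5 : 2 * (L - x) ≤ Real.sin (Real.pi * x / L) * L := (div_le_iff₀ hL).mp h2
    nlinarith

private lemma wnorm_mono (w C : ℝ) (hw : 0 ≤ w) (hC : 0 ≤ C) (f h : ZMod N → ℂ)
    (hpt : ∀ i, ‖f i‖ ≤ C * ‖h i‖) : wnorm w f ≤ C * wnorm w h := by
  unfold wnorm
  rw [← Real.sqrt_sq hC, ← Real.sqrt_mul (sq_nonneg C)]
  apply Real.sqrt_le_sqrt
  calc w * ∑ i : ZMod N, ‖f i‖ ^ 2 ≤ w * ∑ i : ZMod N, C ^ 2 * ‖h i‖ ^ 2 := by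
        apply mul_le_mul_of_nonneg_left _ hw
        apply Finset.sum_le_sum
        intro i _
        calc ‖f i‖ ^ 2 ≤ (C * ‖h i‖) ^ 2 := by
              apply pow_le_pow_left₀ (norm_nonneg _) (hpt i)
          _ = C ^ 2 * ‖h i‖ ^ 2 := by ring
    _ = C ^ 2 * (w * ∑ i : ZMod N, ‖h i‖ ^ 2) := by rw [← Finset.mul_sum]; ring

end Aux

/-- `‖d(·,0)^m g‖_{L²(𝒳)} ≤ (π/2)^m (1/√(2π)) ‖𝒟^{(m)} ĝ‖_{L²(𝒦)}`. -/
theorem stmt_9 (L : ℝ) (N : ℕ) [NeZero N] (hL : 1 ≤ L) (hN : Even N)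
    (g : ZMod N → ℂ) (m : ℕ) (hm : 0 < m) :
    wnorm (L / N) (fun i => ((dfun L (gridX L N i) ^ m : ℝ) : ℂ) * g i) ≤
      (Real.pi / 2) ^ m * (1 / Real.sqrt (2 * Real.pi)) *
        wnorm (2 * Real.pi / L) ((Dk (2 * Real.pi / L))^[m] (dft L g)) := by
  have hpi := Real.pi_pos
  have hL0 : 0 < L := lt_of_lt_of_le one_pos hL
  have hN0 : (0 : ℝ) < (N : ℝ) := by exact_mod_cast Nat.pos_of_ne_zero (NeZero.ne N)
  have hdx : (0 : ℝ) ≤ L / N := by positivity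
  have hpt : ∀ i : ZMod N, ‖((dfun L (gridX L N i) ^ m : ℝ) : ℂ) * g i‖
      ≤ (Real.pi / 2) ^ m * ‖phiC L N i ^ m * g i‖ := by
    intro i
    have hx0 : 0 ≤ gridX L N i := by unfold gridX; positivity
    have hxL : gridX L N i < L := by
      unfold gridX
      have hv : (ZMod.val i : ℝ) < (N : ℝ) := by exact_mod_cast ZMod.val_lt i
      calc (ZMod.val i : ℝ) * (L / N) < (N : ℝ) * (L / N) := by
            apply mul_lt_mul_of_pos_right hv (by positivity)
        _ = L := by field_simp
    have hd0 : 0 ≤ dfun L (gridX L N i) := by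
      unfold dfun; split_ifs <;> linarith
    have hdb : dfun L (gridX L N i) ≤ (Real.pi / 2) * ‖phiC L N i‖ := by
      rw [norm_phiC L hL0 i]
      calc dfun L (gridX L N i) ≤ (L / 2) * Real.sin (Real.pi * (ZMod.val i) / N) :=
            dfun_le L hL0 i
        _ = (Real.pi / 2) * ((L / Real.pi) * Real.sin (Real.pi * (ZMod.val i) / N)) := by
            field_simp
    calc ‖((dfun L (gridX L N i) ^ m : ℝ) : ℂ) * g i‖
        = dfun L (gridX L N i) ^ m * ‖g i‖ := by
          rw [norm_mul, Complex.norm_real, Real.norm_eq_abs,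
            _root_.abs_of_nonneg (pow_nonneg hd0 m)]
      _ ≤ ((Real.pi / 2) * ‖phiC L N i‖) ^ m * ‖g i‖ := by
          apply mul_le_mul_of_nonneg_right _ (norm_nonneg _)
          exact pow_le_pow_left₀ hd0 hdb m
      _ = (Real.pi / 2) ^ m * ‖phiC L N i ^ m * g i‖ := by
          rw [norm_mul, norm_pow, mul_pow]
          ring
  have step1 := wnorm_mono (L / N) ((Real.pi / 2) ^ m) hdx (by positivity)
    (fun i => ((dfun L (gridX L N i) ^ m : ℝ) : ℂ) * g i)
    (fun i => phiC L N i ^ m * g i) hpt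
  have hs2 : Real.sqrt (2 * Real.pi) ≠ 0 := by positivity
  have step2 : wnorm (L / N) (fun i => phiC L N i ^ m * g i)
      = (1 / Real.sqrt (2 * Real.pi)) *
          wnorm (2 * Real.pi / L) ((Dk (2 * Real.pi / L))^[m] (dft L g)) := by
    rw [dk_iterate L hL0 g m, parseval_wnorm L hL0]
    field_simp
  calc wnorm (L / N) (fun i => ((dfun L (gridX L N i) ^ m : ℝ) : ℂ) * g i)
      ≤ (Real.pi / 2) ^ m * wnorm (L / N) (fun i => phiC L N i ^ m * g i) := step1
    _ = (Real.pi / 2) ^ m * (1 / Real.sqrt (2 * Real.pi)) *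
          wnorm (2 * Real.pi / L) ((Dk (2 * Real.pi / L))^[m] (dft L g)) := by
        rw [step2]; ring
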